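/- Normalized orbit equations: let r : I → ℝ³ be a Kepler solution and t ∈ I a time with h(t) ≠ 0. Define l = √μ · h(t)/|h(t)|², s = l × e(t), and the unit position vector r̂ = r(t)/|r(t)|. Then the normalized velocity satisfies ṙ(t)/√μ = s + l × r̂, and the inverse radius satisfies 1/|r(t)| = |l|² + (s × l) · r̂. -/

import Mathlib

open scoped InnerProductSpace

/-- Cross product in ℝ³ (modelled as `EuclideanSpace ℝ (Fin 3)`). -/
noncomputable def cross3 (a b : EuclideanSpace ℝ (Fin 3)) : EuclideanSpace ℝ (Fin 3) :=
  (WithLp.equiv 2 (Fin 3 → ℝ)).symm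
    ![a 1 * b 2 - a 2 * b 1, a 2 * b 0 - a 0 * b 2, a 0 * b 1 - a 1 * b 0]

/-- The vector (x, y, z) ∈ ℝ³. -/
noncomputable def v3 (x y z : ℝ) : EuclideanSpace ℝ (Fin 3) :=
  (WithLp.equiv 2 (Fin 3 → ℝ)).symm ![x, y, z]

lemma cross3_apply (a b : EuclideanSpace ℝ (Fin 3)) (i : Fin 3) :
    cross3 a b i =
      ![a 1 * b 2 - a 2 * b 1, a 2 * b 0 - a 0 * b 2, a 0 * b 1 - a 1 * b 0] i := rfl

lemma cross3_add_right (x y z : EuclideanSpace ℝ (Fin 3)) :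
    cross3 x (y + z) = cross3 x y + cross3 x z := by
  ext i
  fin_cases i <;> simp [cross3_apply, PiLp.add_apply] <;> ring

lemma cross3_smul_right (c : ℝ) (x y : EuclideanSpace ℝ (Fin 3)) :
    cross3 x (c • y) = c • cross3 x y := by
  ext i
  fin_cases i <;> simp [cross3_apply, PiLp.smul_apply] <;> ring

lemma cross3_smul_left (c : ℝ) (x y : EuclideanSpace ℝ (Fin 3)) :
    cross3 (c • x) y = c • cross3 x y := by
  ext i
  fin_cases i <;> simp [cross3_apply, PiLp.smul_apply] <;> ring

lemma cross3_anticomm (x y : EuclideanSpace ℝ (Fin 3)) :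
    cross3 x y = -cross3 y x := by
  ext i
  fin_cases i <;> simp [cross3_apply, PiLp.neg_apply] <;> ring

lemma cross3_bac_cab (x y z : EuclideanSpace ℝ (Fin 3)) :
    cross3 x (cross3 y z) = ⟪x, z⟫_ℝ • y - ⟪x, y⟫_ℝ • z := by
  ext i
  fin_cases i <;>
    simp [cross3_apply, PiLp.sub_apply, PiLp.smul_apply, PiLp.inner_apply,
      Fin.sum_univ_three, RCLike.inner_apply, conj_trivial] <;> ring

lemma inner_cross3_left (x y : EuclideanSpace ℝ (Fin 3)) :
    ⟪cross3 x y, x⟫_ℝ = 0 := by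
  simp [cross3_apply, PiLp.inner_apply, Fin.sum_univ_three, RCLike.inner_apply,
    conj_trivial]
  ring

lemma inner_cross3_right (x y : EuclideanSpace ℝ (Fin 3)) :
    ⟪cross3 x y, y⟫_ℝ = 0 := by
  simp [cross3_apply, PiLp.inner_apply, Fin.sum_univ_three, RCLike.inner_apply,
    conj_trivial]
  ring

lemma inner_cross3_cyclic (x y z : EuclideanSpace ℝ (Fin 3)) :
    ⟪cross3 y z, x⟫_ℝ = ⟪cross3 x y, z⟫_ℝ := by
  simp [cross3_apply, PiLp.inner_apply, Fin.sum_univ_three, RCLike.inner_apply,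
    conj_trivial]
  ring

/-- Normalized orbit equations: with l = √μ·h(t)/|h(t)|², s = l × e(t) and
r̂ = r(t)/|r(t)|, one has ṙ(t)/√μ = s + l × r̂ and 1/|r(t)| = |l|² + (s × l)·r̂. -/
theorem normalized_orbit_equations
(μ : ℝ) (hμ : 0 < μ) (I : Set ℝ) (hIopen : IsOpen I) (hIconn : I.OrdConnected)
    (r : ℝ → EuclideanSpace ℝ (Fin 3))
    (hdiff : ∀ t ∈ I, DifferentiableAt ℝ r t)
    (hdiff' : ∀ t ∈ I, DifferentiableAt ℝ (deriv r) t)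
    (hne : ∀ t ∈ I, r t ≠ 0)
    (hode : ∀ t ∈ I, deriv (deriv r) t = -(μ / ‖r t‖ ^ 3) • r t)
    (t : ℝ) (ht : t ∈ I) (hh : cross3 (r t) (deriv r t) ≠ 0)
    (l s rhat : EuclideanSpace ℝ (Fin 3))
    (hl : l = (Real.sqrt μ / ‖cross3 (r t) (deriv r t)‖ ^ 2) • cross3 (r t) (deriv r t))
    (hs : s = cross3 l
      (μ⁻¹ • cross3 (deriv r t) (cross3 (r t) (deriv r t)) - ‖r t‖⁻¹ • r t))
    (hrhat : rhat = ‖r t‖⁻¹ • r t) :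
    (Real.sqrt μ)⁻¹ • deriv r t = s + cross3 l rhat ∧
    ‖r t‖⁻¹ = ‖l‖ ^ 2 + ⟪cross3 s l, rhat⟫_ℝ := by
  set a := r t with ha
  set b := deriv r t with hb
  set h3 := cross3 a b with hh3
  have hρ : ‖a‖ ≠ 0 := norm_ne_zero_iff.mpr (hne t ht)
  have hH : ‖h3‖ ≠ 0 := norm_ne_zero_iff.mpr hh
  have hsq : Real.sqrt μ ≠ 0 := (Real.sqrt_pos.mpr hμ).ne'
  have hsq2 : Real.sqrt μ ^ 2 = μ := Real.sq_sqrt hμ.le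
  have hμ' : μ ≠ 0 := hμ.ne'
  -- key triple product / orthogonality facts
  have hh3b : ⟪h3, b⟫_ℝ = 0 := by
    rw [real_inner_comm, real_inner_comm] at *
    exact inner_cross3_right a b
  have hh3a : ⟪h3, a⟫_ℝ = 0 := inner_cross3_left a b
  have hbha : ⟪cross3 b h3, a⟫_ℝ = ‖h3‖ ^ 2 := by
    rw [inner_cross3_cyclic a b h3, ← hh3, real_inner_self_eq_norm_sq]
  have hbhh : ⟪h3, cross3 b h3⟫_ℝ = 0 := by
    rw [real_inner_comm]
    exact inner_cross3_right b h3
  have c1 : cross3 h3 (cross3 b h3) = ‖h3‖ ^ 2 • b := by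
    rw [cross3_bac_cab, real_inner_self_eq_norm_sq, hh3b]
    simp
  have hnl : ‖l‖ ^ 2 = μ / ‖h3‖ ^ 2 := by
    rw [hl, norm_smul, mul_pow, Real.norm_eq_abs, sq_abs, div_pow, hsq2]
    field_simp
  constructor
  · -- velocity equation
    rw [hs, hrhat, ← cross3_add_right, sub_add_cancel, cross3_smul_right, hl,
      cross3_smul_left, c1, smul_smul, smul_smul]
    congr 1
    field_simp
    linear_combination (-1 : ℝ) * hsq2
  · -- radius equation
    have hle : ⟪l, μ⁻¹ • cross3 b h3 - ‖a‖⁻¹ • a⟫_ℝ = 0 := by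
      rw [hl, real_inner_smul_left, inner_sub_right, real_inner_smul_right,
        real_inner_smul_right, hbhh, hh3a]
      simp
    have c2 : cross3 s l = ‖l‖ ^ 2 • (μ⁻¹ • cross3 b h3 - ‖a‖⁻¹ • a) := by
      rw [hs, cross3_anticomm, cross3_bac_cab, real_inner_self_eq_norm_sq, hle]
      simp
    rw [c2, hrhat, real_inner_smul_left, real_inner_smul_right, inner_sub_left,
      real_inner_smul_left, real_inner_smul_left, hbha, real_inner_self_eq_norm_sq,
      hnl]
    field_simp
    ring
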